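/- The local ring A = Z_3[[a_1, b_1, a_2, b_2]]/(a_1 b_1 - 3, a_2 b_2 - 3) is not a regular local ring. -/

import Mathlib

/-! The ring `A = ℤ₃[[a₁, b₁, a₂, b₂]] / (a₁b₁ - 3, a₂b₂ - 3)`, where `ℤ₃ = ℤ_[3]` is the
ring of 3-adic integers: the completed local ring of the family of compactified jacobians
at the point `[I]`, `I = ν⁎𝒪(-2)`, in Kass's example. -/

/-!
### Auxiliary general commutative algebra

We first prove Krull's height theorem (not available in this version of Mathlib):
a prime that is minimal over an ideal generated by `n` elements has height at most `n`.
-/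

open IsLocalRing in
/-- A finite module annihilated by a maximal ideal is Artinian. -/
lemma aux_torsion_artinian {R : Type} [CommRing R] {M : Type} [AddCommGroup M] [Module R M]
    [Module.Finite R M] (m : Ideal R) [m.IsMaximal]
    (hT : Module.IsTorsionBySet R M (m : Set R)) : IsArtinian R M := by
  letI : Module (R ⧸ m) M := hT.module
  haveI : IsScalarTower R (R ⧸ m) M := Module.IsTorsionBySet.isScalarTower hT
  haveI : Module.Finite (R ⧸ m) M := Module.Finite.of_restrictScalars_finite R _ _
  letI : Field (R ⧸ m) := Ideal.Quotient.field m
  haveI : IsArtinian (R ⧸ m) M := isArtinian_of_fg_of_artinian'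
  let F : Submodule R M → Submodule (R ⧸ m) M := fun p =>
    { carrier := p
      add_mem' := fun ha hb => p.add_mem ha hb
      zero_mem' := p.zero_mem
      smul_mem' := by
        rintro c x hx
        obtain ⟨r, rfl⟩ := Ideal.Quotient.mk_surjective c
        rw [← Ideal.Quotient.algebraMap_eq, algebraMap_smul]
        exact p.smul_mem r hx }
  have hFmem : ∀ (p : Submodule R M) (x : M), x ∈ F p ↔ x ∈ p := fun p x => Iff.rfl
  have hFinj : Function.Injective F := by
    intro p q hpq
    ext x
    rw [← hFmem p, ← hFmem q, hpq]
  rw [← monotone_stabilizes_iff_artinian]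
  intro f
  obtain ⟨n, hn⟩ := IsArtinian.monotone_stabilizes (R := R ⧸ m) (M := M)
    { toFun := fun k => OrderDual.toDual (F (OrderDual.ofDual (f k)))
      monotone' := fun a b hab => by
        have h1 : OrderDual.ofDual (f b) ≤ OrderDual.ofDual (f a) := f.monotone hab
        exact fun x hx => h1 hx }
  refine ⟨n, fun k hk => ?_⟩
  exact hFinj (congrArg OrderDual.ofDual (hn k hk))

open IsLocalRing in
/-- A finite module annihilated by a power of a maximal ideal is Artinian. -/
lemma aux_art_quot_pow {R : Type} [CommRing R] [IsNoetherianRing R] (m : Ideal R) [m.IsMaximal]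
    (M : Type) [AddCommGroup M] [Module R M] [Module.Finite R M] (k : ℕ)
    (h : m ^ k • (⊤ : Submodule R M) = ⊥) : IsArtinian R M := by
  induction k generalizing M with
  | zero =>
    rw [pow_zero, Ideal.one_eq_top, Submodule.top_smul] at h
    haveI : Subsingleton M := by
      constructor; intro a b
      have ha : a ∈ (⊥ : Submodule R M) := h ▸ Submodule.mem_top
      have hb : b ∈ (⊥ : Submodule R M) := h ▸ Submodule.mem_top
      rw [Submodule.mem_bot] at ha hb; rw [ha, hb]
    haveI : Finite M := Finite.of_subsingleton
    infer_instance
  | succ k ih =>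
    set N : Submodule R M := m ^ k • ⊤ with hN
    haveI : Module.Finite R N := Module.Finite.iff_fg.mpr (IsNoetherian.noetherian N)
    haveI hart1 : IsArtinian R N := by
      refine aux_torsion_artinian m ?_
      intro x a
      have hmem : (a : R) • (x : M) ∈ m ^ (k + 1) • (⊤ : Submodule R M) := by
        rw [pow_succ, mul_comm, ← smul_eq_mul, Submodule.smul_assoc]
        exact Submodule.smul_mem_smul a.2 x.2
      rw [h] at hmem
      exact Subtype.ext (by simpa using hmem)
    haveI hart2 : IsArtinian R (M ⧸ N) := by
      apply ih
      have htop : (⊤ : Submodule R (M ⧸ N)) = Submodule.map N.mkQ ⊤ := by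
        rw [Submodule.map_top, Submodule.range_mkQ]
      rw [htop, ← Submodule.map_smul'', eq_bot_iff]
      intro x hx
      obtain ⟨y, hy, rfl⟩ := hx
      have hyN : y ∈ N := hy
      simpa [Submodule.mem_bot] using (Submodule.Quotient.mk_eq_zero N).mpr hyN
    exact isArtinian_of_range_eq_ker N.subtype N.mkQ
      (by rw [Submodule.range_subtype, Submodule.ker_mkQ])

open IsLocalRing in
/-- Krull's principal ideal theorem, local form: if `x` is a nonunit such that every prime
containing `x` is the maximal ideal, then every prime strictly below the maximal ideal is
a minimal prime. -/
lemma aux_PIT_local {R : Type} [CommRing R] [IsNoetherianRing R] [IsLocalRing R]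
    (x : R) (hxm : x ∈ maximalIdeal R)
    (hx : ∀ P : Ideal R, P.IsPrime → x ∈ P → P = maximalIdeal R)
    (q : Ideal R) (hq : q.IsPrime) (hqm : q ≠ maximalIdeal R)
    (q' : Ideal R) (hq' : q'.IsPrime) (hle : q' ≤ q) : q ≤ q' := by
  have hxq : x ∉ q := fun hmem => hqm (hx q hq hmem)
  set I : Ideal R := Ideal.span {x} with hI
  have hxI : x ∈ I := Ideal.subset_span rfl
  have hrad : maximalIdeal R ≤ I.radical := by
    rw [Ideal.radical_eq_sInf]
    exact le_sInf fun J ⟨hJ1, hJ2⟩ => (hx J hJ2 (hJ1 hxI)).ge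
  obtain ⟨k, hk⟩ := Ideal.exists_pow_le_of_le_radical_of_fg hrad (IsNoetherian.noetherian _)
  haveI : IsArtinian R (R ⧸ I) := by
    refine aux_art_quot_pow (maximalIdeal R) _ k ?_
    rw [eq_bot_iff, Submodule.smul_le]
    intro r hr n _
    obtain ⟨s, rfl⟩ := Ideal.Quotient.mk_surjective n
    have hmul : r • (Ideal.Quotient.mk I s) = Ideal.Quotient.mk I (r * s) := rfl
    rw [hmul, Submodule.mem_bot, Ideal.Quotient.eq_zero_iff_mem]
    exact I.mul_mem_right s (hk hr)
  set Rq := Localization.AtPrime q with hRq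
  set φ := algebraMap R Rq with hφ
  set σ : ℕ → Ideal R := fun n => Ideal.comap φ ((Ideal.map φ q) ^ n) with hσ
  have hσ_anti : ∀ n, σ (n + 1) ≤ σ n :=
    fun n => Ideal.comap_mono (Ideal.pow_le_pow_right (by omega))
  let f : ℕ →o (Submodule R (R ⧸ I))ᵒᵈ :=
    { toFun := fun n => OrderDual.toDual (Submodule.map (Algebra.linearMap R (R ⧸ I)) (σ n))
      monotone' := by
        intro a b hab
        have hba : σ b ≤ σ a := by
          induction hab with
          | refl => exact le_rfl
          | step h ih => exact le_trans (hσ_anti _) (by assumption)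
        exact fun z hz => by
          obtain ⟨u, hu, rfl⟩ := hz
          exact ⟨u, hba hu, rfl⟩ }
  obtain ⟨N, hN⟩ := IsArtinian.monotone_stabilizes f
  have hNN := hN (N + 1) (by omega)
  have hmapeq : Submodule.map (Algebra.linearMap R (R ⧸ I)) (σ N)
      = Submodule.map (Algebra.linearMap R (R ⧸ I)) (σ (N + 1)) := congrArg OrderDual.ofDual hNN
  have key : σ N ≤ σ (N + 1) ⊔ (maximalIdeal R) • (σ N) := by
    intro u hu
    have h1 : Algebra.linearMap R (R ⧸ I) u ∈
        Submodule.map (Algebra.linearMap R (R ⧸ I)) (σ (N + 1)) :=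
      hmapeq ▸ Submodule.mem_map_of_mem hu
    obtain ⟨v, hv, hvu⟩ := h1
    have hsub : u - v ∈ I := by
      have hmkvu : Ideal.Quotient.mk I v = Ideal.Quotient.mk I u := by
        simpa [Ideal.Quotient.algebraMap_eq] using hvu
      have hmk : Ideal.Quotient.mk I (u - v) = 0 := by rw [map_sub, ← hmkvu, sub_self]
      exact Ideal.Quotient.eq_zero_iff_mem.mp hmk
    obtain ⟨a, ha⟩ : ∃ a, u - v = x * a := Ideal.mem_span_singleton.mp hsub
    have hax_mem : x * a ∈ σ N := by
      rw [← ha]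
      exact sub_mem hu (hσ_anti N hv)
    have hunit : IsUnit (φ x) :=
      (IsLocalization.AtPrime.isUnit_to_map_iff Rq q x).mpr hxq
    have haσ : a ∈ σ N := by
      have h2 : φ x * φ a ∈ (Ideal.map φ q) ^ N := by
        have h2' := Ideal.mem_comap.mp hax_mem
        rwa [map_mul] at h2'
      have h3 : φ a ∈ (Ideal.map φ q) ^ N := by
        have h4 := Ideal.mul_mem_right (↑hunit.unit⁻¹) _ h2
        rwa [mul_comm (φ x) (φ a), mul_assoc, IsUnit.mul_val_inv, mul_one] at h4
      exact Ideal.mem_comap.mpr h3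
    have hu_eq : u = v + x * a := by rw [← ha]; ring
    rw [hu_eq]
    refine Submodule.add_mem _ (Submodule.mem_sup_left hv) (Submodule.mem_sup_right ?_)
    rw [← smul_eq_mul]
    exact Submodule.smul_mem_smul hxm haσ
  have hjac : maximalIdeal R ≤ (⊥ : Ideal R).jacobson := by
    rw [IsLocalRing.jacobson_eq_maximalIdeal ⊥ bot_ne_top]
  have h1 : (maximalIdeal R) • σ N ≤ σ (N + 1) :=
    Submodule.smul_le_of_le_smul_of_le_jacobson_bot (IsNoetherian.noetherian (σ N)) hjac key
  have hσeq : σ N = σ (N + 1) :=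
    le_antisymm (key.trans (sup_le le_rfl h1)) (hσ_anti N)
  have hpow : (Ideal.map φ q) ^ N = (Ideal.map φ q) ^ (N + 1) := by
    calc (Ideal.map φ q) ^ N
        = Ideal.map φ (σ N) := (IsLocalization.map_comap q.primeCompl Rq _).symm
      _ = Ideal.map φ (σ (N + 1)) := by rw [hσeq]
      _ = (Ideal.map φ q) ^ (N + 1) := IsLocalization.map_comap q.primeCompl Rq _
  haveI : IsNoetherianRing Rq := IsLocalization.isNoetherianRing q.primeCompl Rq ‹_›
  have hjacq : Ideal.map φ q ≤ (⊥ : Ideal Rq).jacobson := by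
    rw [IsLocalRing.jacobson_eq_maximalIdeal ⊥ bot_ne_top]
    exact le_of_eq (Localization.AtPrime.map_eq_maximalIdeal)
  have hbot : (Ideal.map φ q) ^ N = ⊥ := by
    refine Submodule.eq_bot_of_le_smul_of_le_jacobson_bot (Ideal.map φ q) _
      (IsNoetherian.noetherian _) ?_ hjacq
    rw [smul_eq_mul, ← pow_succ']
    exact le_of_eq hpow
  intro b hb
  have hφb : φ (b ^ N) = 0 := by
    have h5 : (φ b) ^ N ∈ (Ideal.map φ q) ^ N := Ideal.pow_mem_pow (Ideal.mem_map_of_mem φ hb) N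
    rw [hbot, Submodule.mem_bot] at h5
    rw [map_pow]
    exact h5
  obtain ⟨s, hs⟩ := (IsLocalization.map_eq_zero_iff q.primeCompl Rq _).mp hφb
  have hsq' : (s : R) ∉ q' := fun hmem => s.2 (hle hmem)
  have h6 : (s : R) * b ^ N ∈ q' := by rw [hs]; exact q'.zero_mem
  have h7 : b ^ N ∈ q' := ((hq'.mem_or_mem h6).resolve_left hsq')
  exact hq'.mem_of_pow_mem N h7

open IsLocalRing in
/-- In the localization at a minimal prime over `span S`, the maximal ideal is the unique
prime containing `span S`. -/
lemma aux_loc_unique_prime {R : Type} [CommRing R] (p : Ideal R) [hp : p.IsPrime] (S : Set R)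
    (hmin : p ∈ (Ideal.span S).minimalPrimes) :
    ∀ P : Ideal (Localization.AtPrime p), P.IsPrime →
      Ideal.map (algebraMap R (Localization.AtPrime p)) (Ideal.span S) ≤ P →
      P = maximalIdeal (Localization.AtPrime p) := by
  intro P hP hle
  have hcomap_le : Ideal.comap (algebraMap R (Localization.AtPrime p)) P ≤ p := by
    intro r hr
    by_contra hrp
    have hu : IsUnit (algebraMap R (Localization.AtPrime p) r) :=
      (IsLocalization.AtPrime.isUnit_to_map_iff _ p r).mpr hrp
    exact hP.ne_top (Ideal.eq_top_of_isUnit_mem _ hr hu)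
  have hcomap_ge : Ideal.span S ≤ Ideal.comap (algebraMap R (Localization.AtPrime p)) P :=
    le_trans Ideal.le_comap_map (Ideal.comap_mono hle)
  have hge : p ≤ Ideal.comap (algebraMap R (Localization.AtPrime p)) P :=
    hmin.2 ⟨hP.comap _, hcomap_ge⟩ hcomap_le
  have hcomap : Ideal.comap (algebraMap R (Localization.AtPrime p)) P = p :=
    le_antisymm hcomap_le hge
  calc P = Ideal.map (algebraMap R (Localization.AtPrime p))
        (Ideal.comap (algebraMap R (Localization.AtPrime p)) P) :=
        (IsLocalization.map_comap p.primeCompl _ P).symm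
    _ = _ := by rw [hcomap]; exact Localization.AtPrime.map_eq_maximalIdeal

open IsLocalRing in
/-- Krull's height theorem: a prime minimal over an ideal generated by at most `n`
elements has height at most `n`. -/
theorem aux_height_le_of_minimal : ∀ (n : ℕ) {R : Type} [CommRing R] [IsNoetherianRing R]
    (p : PrimeSpectrum R) (S : Finset R), S.card ≤ n →
    p.asIdeal ∈ (Ideal.span (S : Set R)).minimalPrimes →
    Order.height p ≤ (n : ℕ∞) := by
  intro n
  induction n with
  | zero =>
    intro R _ _ p S hcard hmin
    have hS : S = ∅ := Finset.card_eq_zero.mp (Nat.le_zero.mp hcard)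
    subst hS
    have hmin' : p.asIdeal ∈ (⊥ : Ideal R).minimalPrimes := by
      simpa [Ideal.span_empty] using hmin
    have hpmin : IsMin p := by
      intro q hq
      exact (PrimeSpectrum.asIdeal_le_asIdeal _ _).mp (hmin'.2 ⟨q.2, bot_le⟩
        ((PrimeSpectrum.asIdeal_le_asIdeal _ _).mpr hq))
    simp [Order.height_eq_zero.mpr hpmin]
  | succ n ih =>
    intro R _ _ p S hcard hmin
    classical
    refine Order.height_le fun ps hlast => ?_
    by_cases hlen : ps.length = 0
    · simp [hlen]
    set Rp := Localization.AtPrime p.asIdeal with hRp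
    set φ := algebraMap R Rp with hφ
    haveI : IsNoetherianRing Rp := IsLocalization.isNoetherianRing p.asIdeal.primeCompl Rp ‹_›
    have hle_p : ∀ i, (ps i).asIdeal ≤ p.asIdeal := by
      intro i
      have h1 : ps i ≤ ps.last := ps.monotone (Fin.le_last i)
      rw [hlast] at h1
      exact (PrimeSpectrum.asIdeal_le_asIdeal _ _).mpr h1
    have hdisj : ∀ i, Disjoint ((p.asIdeal.primeCompl : Set R)) ((ps i).asIdeal : Set R) := by
      intro i
      rw [Set.disjoint_left]
      intro a ha ha'
      exact ha (hle_p i ha')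
    have hprime : ∀ i, (Ideal.map φ (ps i).asIdeal).IsPrime := fun i =>
      IsLocalization.isPrime_of_isPrime_disjoint p.asIdeal.primeCompl Rp _ (ps i).2 (hdisj i)
    have hcomap_eq : ∀ i, Ideal.comap φ (Ideal.map φ (ps i).asIdeal) = (ps i).asIdeal := fun i =>
      IsLocalization.comap_map_of_isPrime_disjoint p.asIdeal.primeCompl Rp (ps i).2 (hdisj i)
    let ps' : LTSeries (PrimeSpectrum Rp) :=
      { length := ps.length
        toFun := fun i => ⟨Ideal.map φ (ps i).asIdeal, hprime i⟩
        step := by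
          intro i
          have hstep : (ps i.castSucc).asIdeal < (ps i.succ).asIdeal :=
            (PrimeSpectrum.asIdeal_lt_asIdeal _ _).mpr (ps.step i)
          change (_ : PrimeSpectrum Rp) < _
          rw [← PrimeSpectrum.asIdeal_lt_asIdeal]
          refine lt_of_le_of_ne (Ideal.map_mono hstep.le) fun heq => ?_
          have h2 := congrArg (Ideal.comap φ) heq
          rw [hcomap_eq, hcomap_eq] at h2
          exact hstep.ne h2 }
    have hlt_len : ps.length - 1 < ps.length + 1 := by omega
    set i₁ : Fin (ps.length + 1) := ⟨ps.length - 1, hlt_len⟩ with hi₁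
    set q₁ : Ideal Rp := (ps' i₁).asIdeal with hq₁
    have hq₁p : q₁.IsPrime := (ps' i₁).2
    have hq₁_lt : q₁ < maximalIdeal Rp := by
      have hidx : i₁ < Fin.last ps.length := by
        rw [Fin.lt_iff_val_lt_val]
        simp only [Fin.val_last, hi₁]
        omega
      have h3 : ps' i₁ < ps'.last := ps'.strictMono hidx
      have h4 : (ps'.last).asIdeal = maximalIdeal Rp := by
        show Ideal.map φ (ps (Fin.last ps.length)).asIdeal = maximalIdeal Rp
        rw [show ps (Fin.last ps.length) = p from hlast]
        exact Localization.AtPrime.map_eq_maximalIdeal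
      rw [← h4]
      exact (PrimeSpectrum.asIdeal_lt_asIdeal _ _).mpr h3
    -- choose a prime Q maximal among primes between q₁ and the maximal ideal
    have hmaxl := (set_has_maximal_iff_noetherian (R := Rp) (M := Rp)).mpr ‹IsNoetherianRing Rp›
    obtain ⟨Q, ⟨hQp, hq₁Q, hQne⟩, hQmax⟩ := hmaxl
      ({J : Ideal Rp | J.IsPrime ∧ q₁ ≤ J ∧ J ≠ maximalIdeal Rp} : Set (Ideal Rp))
      ⟨q₁, hq₁p, le_rfl, ne_of_lt hq₁_lt⟩
    have hQm : Q ≤ maximalIdeal Rp := le_maximalIdeal hQp.ne_top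
    have hQlt : Q < maximalIdeal Rp := lt_of_le_of_ne hQm hQne
    have hQmax' : ∀ P : Ideal Rp, P.IsPrime → Q < P → P = maximalIdeal Rp := by
      intro P hP hQP
      by_contra hPne
      exact hQmax P ⟨hP, le_trans hq₁Q hQP.le, hPne⟩ hQP
    have hU := aux_loc_unique_prime p.asIdeal (S : Set R) hmin
    have hSp : ∀ x ∈ S, x ∈ p.asIdeal := fun x hx => hmin.1.2 (Ideal.subset_span hx)
    have hSm : ∀ x ∈ S, φ x ∈ maximalIdeal Rp := by
      intro x hx
      rw [← Localization.AtPrime.map_eq_maximalIdeal]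
      exact Ideal.mem_map_of_mem φ (hSp x hx)
    obtain ⟨x₁, hx₁S, hx₁Q⟩ : ∃ x₁ ∈ S, φ x₁ ∉ Q := by
      by_contra hcon
      push_neg at hcon
      refine hQne (hU Q hQp ?_)
      rw [Ideal.map_span, Ideal.span_le]
      rintro - ⟨x, hx, rfl⟩
      exact hcon x hx
    have hrad : ∀ P : Ideal Rp, P.IsPrime → Q ⊔ Ideal.span {φ x₁} ≤ P →
        P = maximalIdeal Rp := by
      intro P hP hlesup
      refine hQmax' P hP (lt_of_le_of_ne (le_trans le_sup_left hlesup) fun heq => ?_)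
      exact hx₁Q (heq ▸ hlesup (Ideal.mem_sup_right (Ideal.subset_span rfl)))
    have hm_rad : maximalIdeal Rp ≤ Ideal.radical (Q ⊔ Ideal.span {φ x₁}) := by
      rw [Ideal.radical_eq_sInf]
      exact le_sInf fun J ⟨hJ1, hJ2⟩ => (hrad J hJ2 hJ1).ge
    have hx_pow : ∀ x, x ∈ S → ∃ (kk : ℕ) (y a : Rp), y ∈ Q ∧ φ x ^ kk = y + a * φ x₁ := by
      intro x hx
      obtain ⟨kk, hkk⟩ := hm_rad (hSm x hx)
      obtain ⟨y, hy, z, hz, hyz⟩ := Submodule.mem_sup.mp hkk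
      obtain ⟨a, ha⟩ := Ideal.mem_span_singleton.mp hz
      exact ⟨kk, y, a, hy, by rw [← hyz, ha, mul_comm]⟩
    choose! kk yy aa hyy haa using hx_pow
    set T : Finset Rp := (S.erase x₁).image yy with hT
    have hTcard : T.card ≤ n := by
      calc T.card ≤ (S.erase x₁).card := Finset.card_image_le
        _ = S.card - 1 := Finset.card_erase_of_mem hx₁S
        _ ≤ n := by omega
    have hTQ : (T : Set Rp) ⊆ Q := by
      intro t hmem
      rw [hT] at hmem
      simp only [Finset.coe_image, Set.mem_image, Finset.mem_coe] at hmem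
      obtain ⟨x, hx, rfl⟩ := hmem
      exact hyy x (Finset.mem_of_mem_erase hx)
    set J : Ideal Rp := Ideal.span (T : Set Rp) with hJ
    have hJQ : J ≤ Q := Ideal.span_le.mpr hTQ
    have hJx : ∀ P : Ideal Rp, P.IsPrime → J ≤ P → φ x₁ ∈ P → P = maximalIdeal Rp := by
      intro P hP hJP hx₁P
      refine hU P hP ?_
      rw [Ideal.map_span, Ideal.span_le]
      rintro - ⟨x, hx, rfl⟩
      by_cases hxx : x = x₁
      · subst hxx; exact hx₁P
      · have hxe : x ∈ S.erase x₁ := Finset.mem_erase.mpr ⟨hxx, hx⟩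
        have hpowm : φ x ^ kk x ∈ P := by
          rw [haa x hx]
          refine P.add_mem (hJP (Ideal.subset_span ?_)) (P.mul_mem_left _ hx₁P)
          rw [hT]
          simp only [Finset.coe_image, Set.mem_image, Finset.mem_coe]
          exact ⟨x, hxe, rfl⟩
        exact hP.mem_of_pow_mem _ hpowm
    have hQmin : Q ∈ J.minimalPrimes := by
      constructor
      · exact ⟨hQp, hJQ⟩
      · rintro P ⟨hPp, hJP⟩ hPQ
        haveI hnontriv : Nontrivial (Rp ⧸ J) :=
          Ideal.Quotient.nontrivial_iff.mpr (fun hJtop => hQp.ne_top (top_le_iff.mp (hJtop ▸ hJQ)))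
        haveI : IsLocalRing (Rp ⧸ J) :=
          IsLocalRing.of_surjective' (Ideal.Quotient.mk J) Ideal.Quotient.mk_surjective
        set mk := Ideal.Quotient.mk J with hmk
        have hmk_max : ∀ r : Rp, r ∈ maximalIdeal Rp → mk r ∈ maximalIdeal (Rp ⧸ J) := by
          intro r hr
          rw [IsLocalRing.mem_maximalIdeal, mem_nonunits_iff]
          intro hunit
          obtain ⟨c, hc⟩ := isUnit_iff_exists_inv.mp hunit
          obtain ⟨d, rfl⟩ := Ideal.Quotient.mk_surjective c
          rw [← map_mul, ← map_one mk, Ideal.Quotient.mk_eq_mk_iff_sub_mem] at hc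
          have h1 : r * d - 1 ∈ maximalIdeal Rp := hQm (hJQ hc)
          have h2 : r * d ∈ maximalIdeal Rp := Ideal.mul_mem_right d _ hr
          have h3 : (1 : Rp) ∈ maximalIdeal Rp := by
            have h4 := sub_mem h2 h1
            simpa using h4
          exact (maximalIdeal.isMaximal Rp).ne_top (Ideal.eq_top_of_isUnit_mem _ h3 isUnit_one)
        have hx₁m : φ x₁ ∈ maximalIdeal Rp := hSm x₁ hx₁S
        have hx'' : ∀ P'' : Ideal (Rp ⧸ J), P''.IsPrime → mk (φ x₁) ∈ P'' →
            P'' = maximalIdeal (Rp ⧸ J) := by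
          intro P'' hP'' hmem
          have hcom_max : Ideal.comap mk P'' = maximalIdeal Rp := by
            refine hJx _ (hP''.comap mk) ?_ (Ideal.mem_comap.mpr hmem)
            intro t ht
            rw [Ideal.mem_comap]
            have ht0 : mk t = 0 := Ideal.Quotient.eq_zero_iff_mem.mpr ht
            rw [ht0]
            exact P''.zero_mem
          have hle1 : maximalIdeal (Rp ⧸ J) ≤ P'' := by
            intro u hu
            obtain ⟨r, rfl⟩ := Ideal.Quotient.mk_surjective u
            have hrm : r ∈ maximalIdeal Rp := by
              rw [IsLocalRing.mem_maximalIdeal, mem_nonunits_iff]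
              intro hunit
              exact (mem_nonunits_iff.mp ((IsLocalRing.mem_maximalIdeal (mk r)).mp hu))
                (hunit.map mk)
            have hcm : r ∈ Ideal.comap mk P'' := hcom_max ▸ hrm
            exact hcm
          exact ((maximalIdeal.isMaximal (Rp ⧸ J)).eq_of_le hP''.ne_top hle1).symm
        have hx₁max'' : mk (φ x₁) ∈ maximalIdeal (Rp ⧸ J) := hmk_max _ hx₁m
        have hkerJ : RingHom.ker mk = J := Ideal.mk_ker
        have hmapQ_prime : (Ideal.map mk Q).IsPrime :=
          Ideal.map_isPrime_of_surjective Ideal.Quotient.mk_surjective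
            (by rw [hkerJ]; exact hJQ)
        have hmapP_prime : (Ideal.map mk P).IsPrime :=
          Ideal.map_isPrime_of_surjective Ideal.Quotient.mk_surjective
            (by rw [hkerJ]; exact hJP)
        have hcomap_mapQ : Ideal.comap mk (Ideal.map mk Q) = Q := by
          rw [Ideal.comap_map_of_surjective mk Ideal.Quotient.mk_surjective,
            ← RingHom.ker_eq_comap_bot, hkerJ, sup_eq_left.mpr hJQ]
        have hcomap_mapP : Ideal.comap mk (Ideal.map mk P) = P := by
          rw [Ideal.comap_map_of_surjective mk Ideal.Quotient.mk_surjective,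
            ← RingHom.ker_eq_comap_bot, hkerJ, sup_eq_left.mpr hJP]
        have hmapQ_ne : Ideal.map mk Q ≠ maximalIdeal (Rp ⧸ J) := by
          intro heq
          have hmQ : maximalIdeal Rp ≤ Q := by
            intro r hr
            have hr2 : mk r ∈ Ideal.map mk Q := heq ▸ hmk_max r hr
            rw [← hcomap_mapQ]
            exact Ideal.mem_comap.mpr hr2
          exact hQne (le_antisymm hQm hmQ)
        have hPIT := aux_PIT_local (mk (φ x₁)) hx₁max'' hx'' (Ideal.map mk Q) hmapQ_prime
          hmapQ_ne (Ideal.map mk P) hmapP_prime (Ideal.map_mono hPQ)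
        calc Q = Ideal.comap mk (Ideal.map mk Q) := hcomap_mapQ.symm
          _ ≤ Ideal.comap mk (Ideal.map mk P) := Ideal.comap_mono hPIT
          _ = P := hcomap_mapP
    have hhQ : Order.height (⟨Q, hQp⟩ : PrimeSpectrum Rp) ≤ (n : ℕ∞) := ih ⟨Q, hQp⟩ T hTcard hQmin
    have hlast_erase : ps'.eraseLast.last ≤ (⟨Q, hQp⟩ : PrimeSpectrum Rp) := by
      rw [RelSeries.last_eraseLast]
      rw [← PrimeSpectrum.asIdeal_le_asIdeal]
      exact hq₁Q
    have hlen_le : (ps'.eraseLast.length : ℕ∞) ≤ Order.height (⟨Q, hQp⟩ : PrimeSpectrum Rp) :=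
      Order.length_le_height hlast_erase
    have hfin : ps.length - 1 ≤ n := by
      have h7 := le_trans hlen_le hhQ
      have h8 : ps'.eraseLast.length = ps.length - 1 := rfl
      rw [h8] at h7
      exact_mod_cast h7
    have hfin2 : ps.length ≤ n + 1 := by omega
    exact_mod_cast hfin2

/-!
### The specific ring
-/

/-- The formal power series ring `ℤ₃[[a₁, b₁, a₂, b₂]]` in four variables over the
3-adic integers. -/
abbrev B : Type := MvPowerSeries (Fin 4) ℤ_[3]

/-- The ideal `(a₁b₁ - 3, a₂b₂ - 3)` of `ℤ₃[[a₁, b₁, a₂, b₂]]`, where `a₁, b₁, a₂, b₂`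
are the four variables. -/
noncomputable abbrev relIdeal : Ideal B :=
  Ideal.span {MvPowerSeries.X 0 * MvPowerSeries.X 1 - 3,
    MvPowerSeries.X 2 * MvPowerSeries.X 3 - 3}

/-- The ring `A = ℤ₃[[a₁, b₁, a₂, b₂]] / (a₁b₁ - 3, a₂b₂ - 3)`. -/
abbrev A : Type := B ⧸ relIdeal

/-- The image `a₁` in `A` of the first variable. -/
noncomputable def a1 : A := Ideal.Quotient.mk relIdeal (MvPowerSeries.X 0)

/-- The image `b₁` in `A` of the second variable. -/
noncomputable def b1 : A := Ideal.Quotient.mk relIdeal (MvPowerSeries.X 1)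

/-- The image `a₂` in `A` of the third variable. -/
noncomputable def a2 : A := Ideal.Quotient.mk relIdeal (MvPowerSeries.X 2)

/-- The image `b₂` in `A` of the fourth variable. -/
noncomputable def b2 : A := Ideal.Quotient.mk relIdeal (MvPowerSeries.X 3)

lemma coeff_X_mul' (n : Fin 4 →₀ ℕ) (i : Fin 4) (φ : B) :
    MvPowerSeries.coeff (R := ℤ_[3]) n (MvPowerSeries.X i * φ)
      = if Finsupp.single i 1 ≤ n
          then MvPowerSeries.coeff (R := ℤ_[3]) (n - Finsupp.single i 1) φ else 0 := by
  rw [MvPowerSeries.X_def, MvPowerSeries.coeff_monomial_mul]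
  split <;> simp

lemma mem_span_X {f : B} (hf : MvPowerSeries.constantCoeff (σ := Fin 4) (R := ℤ_[3]) f = 0) :
    f ∈ Ideal.span (Set.range (MvPowerSeries.X : Fin 4 → B)) := by
  classical
  set g : Fin 4 → B := fun i => fun m =>
    if (∀ j, j < i → m j = 0)
      then MvPowerSeries.coeff (R := ℤ_[3]) (m + Finsupp.single i 1) f else 0 with hg
  have hgapply : ∀ (i : Fin 4) (m : Fin 4 →₀ ℕ), MvPowerSeries.coeff (R := ℤ_[3]) m (g i)
      = if (∀ j, j < i → m j = 0)
          then MvPowerSeries.coeff (R := ℤ_[3]) (m + Finsupp.single i 1) f else 0 := fun i m => rfl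
  have key : f = ∑ i : Fin 4, MvPowerSeries.X i * g i := by
    apply MvPowerSeries.ext
    intro n
    rw [map_sum]
    have hterm : ∀ i : Fin 4, MvPowerSeries.coeff (R := ℤ_[3]) n (MvPowerSeries.X i * g i)
        = if Finsupp.single i 1 ≤ n ∧ ∀ j, j < i → n j = 0
            then MvPowerSeries.coeff (R := ℤ_[3]) n f else 0 := by
      intro i
      rw [coeff_X_mul']
      by_cases h1 : Finsupp.single i 1 ≤ n
      · rw [if_pos h1, hgapply, tsub_add_cancel_of_le h1]
        have hsub_apply : ∀ j, j ≠ i → (n - Finsupp.single i 1 : Fin 4 →₀ ℕ) j = n j := by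
          intro j hj
          rw [Finsupp.tsub_apply, Finsupp.single_apply, if_neg (fun h => hj h.symm)]
          rfl
        by_cases h2 : ∀ j, j < i → n j = 0
        · rw [if_pos (fun j hj => by rw [hsub_apply j (ne_of_lt hj)]; exact h2 j hj),
            if_pos ⟨h1, h2⟩]
        · rw [if_neg, if_neg (fun hc => h2 hc.2)]
          intro hcon
          exact h2 (fun j hj => by rw [← hsub_apply j (ne_of_lt hj)]; exact hcon j hj)
      · rw [if_neg h1, if_neg (fun hc => h1 hc.1)]
    rw [Finset.sum_congr rfl (fun i _ => hterm i)]
    by_cases hn : n = 0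
    · subst hn
      rw [Finset.sum_eq_zero, show MvPowerSeries.coeff (R := ℤ_[3]) 0 f = 0 from hf]
      intro i _
      rw [if_neg]
      rintro ⟨h1, -⟩
      simpa using (Finsupp.single_le_iff.mp h1)
    · have hex : ∃ i, n i ≠ 0 := by
        by_contra hcon
        push_neg at hcon
        exact hn (Finsupp.ext hcon)
      set sfil := Finset.univ.filter (fun i : Fin 4 => n i ≠ 0) with hsfil
      have hne : sfil.Nonempty := by
        obtain ⟨i, hi⟩ := hex
        exact ⟨i, Finset.mem_filter.mpr ⟨Finset.mem_univ i, hi⟩⟩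
      set i0 := sfil.min' hne with hi0
      have hni0 : n i0 ≠ 0 := (Finset.mem_filter.mp (sfil.min'_mem hne)).2
      have hlt0 : ∀ j, j < i0 → n j = 0 := by
        intro j hj
        by_contra hcon
        exact absurd (sfil.min'_le j (Finset.mem_filter.mpr ⟨Finset.mem_univ j, hcon⟩))
          (not_le_of_gt hj)
      rw [Finset.sum_eq_single i0]
      · rw [if_pos ⟨Finsupp.single_le_iff.mpr (Nat.one_le_iff_ne_zero.mpr hni0), hlt0⟩]
      · intro i _ hii
        rw [if_neg]
        rintro ⟨h1, h2⟩
        have hni : n i ≠ 0 := Nat.one_le_iff_ne_zero.mp (Finsupp.single_le_iff.mp h1)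
        have hile : i0 ≤ i := sfil.min'_le i (Finset.mem_filter.mpr ⟨Finset.mem_univ i, hni⟩)
        rcases eq_or_lt_of_le hile with heq | hlt
        · exact hii heq.symm
        · exact hni0 (h2 i0 hlt)
      · intro hcon
        exact absurd (Finset.mem_univ i0) hcon
  rw [key]
  exact Ideal.sum_mem _ fun i _ =>
    Ideal.mul_mem_right (g i) _ (Ideal.subset_span ⟨i, rfl⟩)

/-- The residue map `B → 𝔽₃`. -/
noncomputable def ψB : B →+* ZMod 3 :=
  (PadicInt.toZMod).comp (MvPowerSeries.constantCoeff (σ := Fin 4) (R := ℤ_[3]))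

/-- The maximal ideal `(3, X 0, X 1, X 2, X 3)` of `B`. -/
noncomputable def M0' : Ideal B :=
  Ideal.span ({(3 : B)} ∪ Set.range (MvPowerSeries.X : Fin 4 → B))

lemma ψB_apply (f : B) : ψB f = PadicInt.toZMod (MvPowerSeries.constantCoeff (σ := Fin 4) (R := ℤ_[3]) f) :=
  rfl

lemma toZMod_three : PadicInt.toZMod (3 : ℤ_[3]) = 0 := by
  have h3 : ((3 : ℕ) : ℤ_[3]) = (3 : ℤ_[3]) := by norm_num
  rw [← h3, map_natCast]
  decide

lemma ker_ψB : RingHom.ker ψB = M0' := by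
  ext f
  constructor
  · intro hfk
    have h0 : PadicInt.toZMod (MvPowerSeries.constantCoeff (σ := Fin 4) (R := ℤ_[3]) f) = 0 :=
      RingHom.mem_ker.mp hfk
    have h1 : MvPowerSeries.constantCoeff (σ := Fin 4) (R := ℤ_[3]) f ∈ Ideal.span {(3 : ℤ_[3])} := by
      have h2 : MvPowerSeries.constantCoeff (σ := Fin 4) (R := ℤ_[3]) f ∈ RingHom.ker (PadicInt.toZMod) :=
        RingHom.mem_ker.mpr h0
      rwa [PadicInt.ker_toZMod, PadicInt.maximalIdeal_eq_span_p] at h2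
    obtain ⟨z, hz⟩ := Ideal.mem_span_singleton.mp h1
    have hsplit : f = MvPowerSeries.C (σ := Fin 4) (R := ℤ_[3]) (MvPowerSeries.constantCoeff (σ := Fin 4) (R := ℤ_[3]) f)
        + (f - MvPowerSeries.C (σ := Fin 4) (R := ℤ_[3]) (MvPowerSeries.constantCoeff (σ := Fin 4) (R := ℤ_[3]) f)) := by
      ring
    rw [M0', hsplit]
    refine Ideal.add_mem _ ?_ ?_
    · rw [hz, map_mul]
      have h3 : (MvPowerSeries.C (σ := Fin 4) (R := ℤ_[3])) 3 = (3 : B) := by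
        push_cast [map_ofNat]
        rfl
      rw [h3]
      exact Ideal.mul_mem_right _ _ (Ideal.subset_span (Or.inl rfl))
    · refine Ideal.span_mono Set.subset_union_right (mem_span_X ?_)
      rw [map_sub, MvPowerSeries.constantCoeff_C]
      ring
  · intro hfm
    refine (Ideal.span_le.mpr ?_) hfm
    rintro x (rfl | ⟨i, rfl⟩)
    · rw [SetLike.mem_coe, RingHom.mem_ker, ψB_apply]
      rw [show MvPowerSeries.constantCoeff (σ := Fin 4) (R := ℤ_[3]) (3 : B) = 3 from map_ofNat _ 3]
      exact toZMod_three
    · rw [SetLike.mem_coe, RingHom.mem_ker, ψB_apply, MvPowerSeries.constantCoeff_X, map_zero]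

lemma ψB_surjective : Function.Surjective ψB := by
  intro z
  refine ⟨MvPowerSeries.C (σ := Fin 4) (R := ℤ_[3]) ((z.val : ℕ) : ℤ_[3]), ?_⟩
  rw [ψB_apply, MvPowerSeries.constantCoeff_C, map_natCast]
  exact ZMod.natCast_rightInverse z

lemma relIdeal_le_M0' : relIdeal ≤ M0' := by
  rw [Ideal.span_le]
  have h3 : (3 : B) ∈ M0' := Ideal.subset_span (Or.inl rfl)
  have hX : ∀ i : Fin 4, MvPowerSeries.X i ∈ M0' := fun i =>
    Ideal.subset_span (Or.inr ⟨i, rfl⟩)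
  rintro x (rfl | rfl)
  · exact sub_mem (Ideal.mul_mem_right _ _ (hX 0)) h3
  · exact sub_mem (Ideal.mul_mem_right _ _ (hX 2)) h3

/-- The residue map `A → 𝔽₃`. -/
noncomputable def ψbar : A →+* ZMod 3 :=
  Ideal.Quotient.lift relIdeal ψB (fun r hr => by
    have hker : r ∈ RingHom.ker ψB := ker_ψB ▸ relIdeal_le_M0' hr
    exact RingHom.mem_ker.mp hker)

lemma ψbar_mk (f : B) : ψbar (Ideal.Quotient.mk relIdeal f) = ψB f :=
  Ideal.Quotient.lift_mk relIdeal _ _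

/-- The maximal ideal of `A`. -/
noncomputable def M0 : Ideal A := RingHom.ker ψbar

lemma ψbar_surjective : Function.Surjective ψbar := by
  intro z
  obtain ⟨f, hf⟩ := ψB_surjective z
  exact ⟨Ideal.Quotient.mk relIdeal f, by rw [ψbar_mk, hf]⟩

lemma M0_isMaximal : M0.IsMaximal := RingHom.ker_isMaximal_of_surjective ψbar ψbar_surjective

lemma M0_eq_map : M0 = Ideal.map (Ideal.Quotient.mk relIdeal) M0' := by
  apply le_antisymm
  · intro x hx
    obtain ⟨f, rfl⟩ := Ideal.Quotient.mk_surjective x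
    have hf : f ∈ M0' := by
      rw [← ker_ψB, RingHom.mem_ker, ← ψbar_mk]
      exact RingHom.mem_ker.mp hx
    exact Ideal.mem_map_of_mem _ hf
  · rw [Ideal.map_le_iff_le_comap]
    intro f hf
    rw [Ideal.mem_comap, M0, RingHom.mem_ker, ψbar_mk, ← RingHom.mem_ker, ker_ψB]
    exact hf

lemma coeff_zero_mul (u v : B) : MvPowerSeries.coeff (R := ℤ_[3]) 0 (u * v)
    = MvPowerSeries.coeff (R := ℤ_[3]) 0 u * MvPowerSeries.coeff (R := ℤ_[3]) 0 v := by
  simp only [MvPowerSeries.coeff_zero_eq_constantCoeff, map_mul]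

lemma antidiagonal_one_nat : Finset.HasAntidiagonal.antidiagonal (1 : ℕ) = {(0, 1), (1, 0)} := by
  decide

lemma coeff_single_mul (j : Fin 4) (u v : B) :
    MvPowerSeries.coeff (R := ℤ_[3]) (Finsupp.single j 1) (u * v)
      = MvPowerSeries.coeff (R := ℤ_[3]) 0 u * MvPowerSeries.coeff (R := ℤ_[3]) (Finsupp.single j 1) v
        + MvPowerSeries.coeff (R := ℤ_[3]) (Finsupp.single j 1) u * MvPowerSeries.coeff (R := ℤ_[3]) 0 v := by
  classical
  rw [MvPowerSeries.coeff_mul, Finsupp.antidiagonal_single, antidiagonal_one_nat]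
  rw [Finset.map_insert, Finset.map_singleton, Finset.sum_insert, Finset.sum_singleton]
  · simp [Finsupp.single_zero]
  · simp

/-- The ideal of `B` of series whose constant and linear coefficients vanish mod 3. -/
noncomputable def KB : Ideal B where
  carrier := {f | PadicInt.toZMod (MvPowerSeries.coeff (R := ℤ_[3]) 0 f) = 0 ∧
    ∀ j : Fin 4, PadicInt.toZMod (MvPowerSeries.coeff (R := ℤ_[3]) (Finsupp.single j 1) f) = 0}
  add_mem' := by
    rintro a b ⟨ha0, ha1⟩ ⟨hb0, hb1⟩
    refine ⟨by rw [map_add, map_add, ha0, hb0, add_zero], fun j => ?_⟩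
    rw [map_add, map_add, ha1 j, hb1 j, add_zero]
  zero_mem' := by
    refine ⟨by rw [map_zero, map_zero], fun j => by rw [map_zero, map_zero]⟩
  smul_mem' := by
    rintro c f ⟨h0, h1⟩
    rw [smul_eq_mul]
    refine ⟨by rw [coeff_zero_mul, map_mul, h0, mul_zero], fun j => ?_⟩
    rw [coeff_single_mul, map_add, map_mul, map_mul, h0, h1 j, mul_zero, mul_zero, add_zero]

lemma pairs_in_KB {u v : B} (hu : u ∈ M0') (hv : v ∈ M0') : u * v ∈ KB := by
  have hu0 : PadicInt.toZMod (MvPowerSeries.coeff (R := ℤ_[3]) 0 u) = 0 := by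
    rw [← ker_ψB] at hu
    rw [MvPowerSeries.coeff_zero_eq_constantCoeff]
    exact RingHom.mem_ker.mp hu
  have hv0 : PadicInt.toZMod (MvPowerSeries.coeff (R := ℤ_[3]) 0 v) = 0 := by
    rw [← ker_ψB] at hv
    rw [MvPowerSeries.coeff_zero_eq_constantCoeff]
    exact RingHom.mem_ker.mp hv
  refine ⟨by rw [coeff_zero_mul, map_mul, hu0, zero_mul], fun j => ?_⟩
  rw [coeff_single_mul, map_add, map_mul, map_mul, hu0, hv0, zero_mul, mul_zero, add_zero]

lemma coeff_single_three (j : Fin 4) :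
    MvPowerSeries.coeff (R := ℤ_[3]) (Finsupp.single j 1) (3 : B) = 0 := by
  have h3 : (3 : B) = MvPowerSeries.C (σ := Fin 4) (R := ℤ_[3]) 3 := by
    push_cast [map_ofNat]
    rfl
  rw [h3, MvPowerSeries.coeff_C, if_neg (fun hc => one_ne_zero (Finsupp.single_eq_zero.mp hc))]

lemma relIdeal_le_KB : relIdeal ≤ KB := by
  rw [Ideal.span_le]
  have hgen : ∀ i k : Fin 4, MvPowerSeries.X i * MvPowerSeries.X k - 3 ∈ KB := by
    intro i k
    constructor
    · rw [map_sub, coeff_zero_mul]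
      simp only [MvPowerSeries.coeff_zero_eq_constantCoeff, MvPowerSeries.constantCoeff_X,
        zero_mul, zero_sub, map_neg]
      rw [show MvPowerSeries.constantCoeff (σ := Fin 4) (R := ℤ_[3]) (3 : B) = 3 from map_ofNat _ 3,
        toZMod_three, neg_zero]
    · intro j
      rw [map_sub, coeff_single_mul, coeff_single_three]
      simp only [MvPowerSeries.coeff_zero_eq_constantCoeff, MvPowerSeries.constantCoeff_X,
        zero_mul, mul_zero, add_zero, sub_zero, map_zero]
  rintro x (rfl | rfl)
  · exact hgen 0 1
  · exact hgen 2 3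

lemma sq_M0'_le_KB : M0' ^ 2 ≤ KB := by
  rw [pow_two, Ideal.mul_le]
  exact fun r hr s hs => pairs_in_KB hr hs

/-- The key linear-independence computation. -/
lemma core_indep (C : Fin 4 → B)
    (hmem : (∑ i, C i * MvPowerSeries.X i) ∈ M0' ^ 2 ⊔ relIdeal) (j : Fin 4) :
    PadicInt.toZMod (MvPowerSeries.constantCoeff (σ := Fin 4) (R := ℤ_[3]) (C j)) = 0 := by
  classical
  have hK : (∑ i, C i * MvPowerSeries.X i) ∈ KB :=
    (sup_le sq_M0'_le_KB relIdeal_le_KB) hmem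
  have h1 := hK.2 j
  rw [map_sum] at h1
  have hterm : ∀ i : Fin 4,
      MvPowerSeries.coeff (R := ℤ_[3]) (Finsupp.single j 1) (C i * MvPowerSeries.X i)
        = if i = j then MvPowerSeries.coeff (R := ℤ_[3]) 0 (C j) else 0 := by
    intro i
    rw [coeff_single_mul]
    rw [show MvPowerSeries.coeff (R := ℤ_[3]) 0 (MvPowerSeries.X i : B) = 0 by
      simp [MvPowerSeries.coeff_zero_eq_constantCoeff]]
    rw [MvPowerSeries.coeff_X]
    by_cases hij : i = j
    · subst hij
      rw [if_pos rfl, if_pos rfl, mul_one, mul_zero, add_zero]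
    · rw [if_neg (fun hc => hij (by
        exact Finsupp.single_left_injective (α := Fin 4) (one_ne_zero (α := ℕ)) hc.symm)),
        if_neg hij, mul_zero, mul_zero, add_zero]
  rw [Finset.sum_congr rfl (fun i _ => hterm i), Finset.sum_ite_eq' Finset.univ j
    (fun _ => MvPowerSeries.coeff (R := ℤ_[3]) 0 (C j)), if_pos (Finset.mem_univ j)] at h1
  rwa [MvPowerSeries.coeff_zero_eq_constantCoeff] at h1

lemma a1_mul_b1 : a1 * b1 = (3 : A) := by
  rw [a1, b1, ← map_mul,
    show (3 : A) = Ideal.Quotient.mk relIdeal (3 : B) from (map_ofNat _ 3).symm,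
    Ideal.Quotient.mk_eq_mk_iff_sub_mem]
  exact Ideal.subset_span (Set.mem_insert _ _)

lemma a2_mul_b2 : a2 * b2 = (3 : A) := by
  rw [a2, b2, ← map_mul,
    show (3 : A) = Ideal.Quotient.mk relIdeal (3 : B) from (map_ofNat _ 3).symm,
    Ideal.Quotient.mk_eq_mk_iff_sub_mem]
  exact Ideal.subset_span (Set.mem_insert_of_mem _ rfl)

/-- The local ring `A = ℤ₃[[a₁, b₁, a₂, b₂]] / (a₁b₁ - 3, a₂b₂ - 3)` is not a regular
local ring: it is not a Noetherian local ring whose Krull dimension equals the minimal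
number of generators of its maximal ideal (the residue-field dimension of `m/m²`). -/
theorem A_not_regular :
    ¬ ∃ (_ : IsNoetherianRing A) (h : IsLocalRing A),
      letI := h
      ringKrullDim A =
        Module.finrank (IsLocalRing.ResidueField A) (IsLocalRing.CotangentSpace A) := by
  classical
  rintro ⟨hN, h, heq⟩
  haveI := hN
  haveI := h
  set π := Ideal.Quotient.mk relIdeal with hπ
  have hm : IsLocalRing.maximalIdeal A = M0 := (IsLocalRing.eq_maximalIdeal M0_isMaximal).symm
  have hψX : ∀ i : Fin 4, π (MvPowerSeries.X i) ∈ M0 := by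
    intro i
    rw [M0, RingHom.mem_ker, ψbar_mk, ψB_apply, MvPowerSeries.constantCoeff_X, map_zero]
  have h3M0 : (3 : A) ∈ M0 := by
    rw [← a1_mul_b1]
    exact M0.mul_mem_right b1 (hψX 0)
  -- ====== Krull dimension bound ======
  set S : Finset A := {a1, b1, a2 + b2} with hS
  have hScard : S.card ≤ 3 := by
    have h2 := Finset.card_insert_le b1 ({a2 + b2} : Finset A)
    have h3 := Finset.card_insert_le a1 ({b1, a2 + b2} : Finset A)
    have h1 : ({a2 + b2} : Finset A).card = 1 := Finset.card_singleton _
    have hSeq : S = insert a1 ({b1, a2 + b2} : Finset A) := rfl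
    rw [hSeq]
    omega
  have hSsub : ∀ x ∈ S, x ∈ M0 := by
    intro x hx
    rw [hS] at hx
    rcases Finset.mem_insert.mp hx with rfl | hx
    · exact hψX 0
    rcases Finset.mem_insert.mp hx with rfl | hx
    · exact hψX 1
    rw [Finset.mem_singleton] at hx
    subst hx
    exact M0.add_mem (hψX 2) (hψX 3)
  have hmin : (IsLocalRing.maximalIdeal A) ∈ (Ideal.span (S : Set A)).minimalPrimes := by
    constructor
    · refine ⟨(IsLocalRing.maximalIdeal.isMaximal A).isPrime, ?_⟩
      rw [Ideal.span_le, hm]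
      intro x hx
      exact hSsub x (Finset.mem_coe.mp hx)
    · rintro y ⟨hyp, hyle⟩ -
      have ha1y : a1 ∈ y := hyle (Ideal.subset_span (by simp [hS]))
      have hb1y : b1 ∈ y := hyle (Ideal.subset_span (by simp [hS]))
      have hsy : a2 + b2 ∈ y := hyle (Ideal.subset_span (by simp [hS]))
      have h3y : (3 : A) ∈ y := by
        rw [← a1_mul_b1]
        exact y.mul_mem_right b1 ha1y
      have hab2 : a2 * b2 ∈ y := by rw [a2_mul_b2]; exact h3y
      have ha2b2 : a2 ∈ y ∧ b2 ∈ y := by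
        rcases hyp.mem_or_mem hab2 with hcase | hcase
        · exact ⟨hcase, by simpa using y.sub_mem hsy hcase⟩
        · exact ⟨by simpa using y.sub_mem hsy hcase, hcase⟩
      rw [hm, M0_eq_map, Ideal.map_le_iff_le_comap, M0', Ideal.span_le]
      rintro x (rfl | ⟨i, rfl⟩)
      · rw [SetLike.mem_coe, Ideal.mem_comap,
          show π (3 : B) = (3 : A) from map_ofNat _ 3]
        exact h3y
      · rw [SetLike.mem_coe, Ideal.mem_comap]
        fin_cases i
        · exact ha1y
        · exact hb1y
        · exact ha2b2.1
        · exact ha2b2.2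
  have hp_prime := (IsLocalRing.maximalIdeal.isMaximal A).isPrime
  have hht := aux_height_le_of_minimal 3
    (⟨IsLocalRing.maximalIdeal A, hp_prime⟩ : PrimeSpectrum A) S hScard hmin
  have hall : ∀ x : PrimeSpectrum A, Order.height x ≤ (3 : ℕ∞) := by
    intro x
    refine le_trans (Order.height_mono ?_) hht
    rw [← PrimeSpectrum.asIdeal_le_asIdeal]
    exact IsLocalRing.le_maximalIdeal x.2.ne_top
  have hdim : ringKrullDim A ≤ ((3 : ℕ∞) : WithBot ℕ∞) := by
    rw [show ringKrullDim A = Order.krullDim (PrimeSpectrum A) from rfl,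
      Order.krullDim_eq_iSup_height_of_nonempty]
    exact WithBot.coe_le_coe.mpr (iSup_le hall)
  -- ====== cotangent space bound ======
  have hXm : ∀ i : Fin 4, π (MvPowerSeries.X i) ∈ IsLocalRing.maximalIdeal A :=
    fun i => hm ▸ hψX i
  set v : Fin 4 → IsLocalRing.CotangentSpace A := fun i =>
    (IsLocalRing.maximalIdeal A).toCotangent ⟨π (MvPowerSeries.X i), hXm i⟩ with hv
  have hli : LinearIndependent (IsLocalRing.ResidueField A) v := by
    rw [Fintype.linearIndependent_iff]
    intro cc hcc j
    have hsurj : Function.Surjective (Ideal.Quotient.mk (IsLocalRing.maximalIdeal A)) :=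
      Ideal.Quotient.mk_surjective
    choose d hd using fun i => hsurj (cc i)
    choose D hD using fun i => Ideal.Quotient.mk_surjective (I := relIdeal) (d i)
    have hc2 : (IsLocalRing.maximalIdeal A).toCotangent
        (∑ i, d i • (⟨π (MvPowerSeries.X i), hXm i⟩ : IsLocalRing.maximalIdeal A)) = 0 := by
      rw [map_sum]
      calc ∑ i, (IsLocalRing.maximalIdeal A).toCotangent
            (d i • (⟨π (MvPowerSeries.X i), hXm i⟩ : IsLocalRing.maximalIdeal A))
          = ∑ i, cc i • v i := by
            refine Finset.sum_congr rfl fun i _ => ?_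
            rw [map_smul, ← hd i]
            exact (algebraMap_smul (IsLocalRing.ResidueField A) (d i) (v i)).symm
        _ = 0 := hcc
    rw [Ideal.toCotangent_eq_zero] at hc2
    simp only [AddSubmonoidClass.coe_finset_sum, SetLike.val_smul, smul_eq_mul] at hc2
    have hval : ∑ i, d i * π (MvPowerSeries.X i) = π (∑ i, D i * MvPowerSeries.X i) := by
      rw [map_sum]
      exact Finset.sum_congr rfl fun i _ => by rw [map_mul, hD i]
    rw [hval] at hc2
    have hc3 : (∑ i, D i * MvPowerSeries.X i) ∈ M0' ^ 2 ⊔ relIdeal := by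
      rw [hm, M0_eq_map, ← Ideal.map_pow] at hc2
      have hc4 := Ideal.mem_comap.mpr hc2
      rwa [Ideal.comap_map_of_surjective π Ideal.Quotient.mk_surjective,
        ← RingHom.ker_eq_comap_bot, Ideal.mk_ker] at hc4
    have hcore := core_indep D hc3 j
    rw [← hd j]; refine Ideal.Quotient.eq_zero_iff_mem.mpr ?_
    rw [hm, M0, RingHom.mem_ker, ← hD j, ψbar_mk, ψB_apply]
    exact hcore
  have hrank : 4 ≤ Module.finrank (IsLocalRing.ResidueField A) (IsLocalRing.CotangentSpace A) := by
    have hcard := hli.fintype_card_le_finrank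
    simpa using hcard
  -- ====== contradiction ======
  have h4 : ((4 : ℕ∞) : WithBot ℕ∞) ≤ ringKrullDim A := by
    rw [heq]
    exact_mod_cast hrank
  have hcontra := le_trans h4 hdim
  norm_num at hcontra
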